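/- Let G be an infinite, locally finite, strongly connected, quasi-transitive, unimodular directed graph and let Ḡ be the graph obtained by reversing all edges. Then there exists a constant C ≥ 1 such that C^{-1} ≤ σ^F_n(G) / σ^B_n(Ḡ) ≤ C for all n ≥ 0; if moreover G is vertex-transitive one may take C = 1. -/

import Mathlib

open Filter ENNReal

structure Dgraph where
  V : Type
  E : Type
  src : E → V
  tgt : E → V

namespace Dgraph

variable (G : Dgraph)

/-- Every vertex has finite in-degree and out-degree. -/
def LocallyFinite : Prop :=
  ∀ v : G.V, {e : G.E | G.src e = v}.Finite ∧ {e : G.E | G.tgt e = v}.Finite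

/-- There is a directed edge from `u` to `v`. -/
def Adj (u v : G.V) : Prop := ∃ e : G.E, G.src e = u ∧ G.tgt e = v

/-- Directed walks exist between any ordered pair of vertices. -/
def StronglyConnected : Prop := ∀ u v : G.V, Relation.ReflTransGen G.Adj u v

/-- An automorphism of a directed multigraph. -/
structure Aut where
  vmap : G.V ≃ G.V
  emap : G.E ≃ G.E
  src_eq : ∀ e, G.src (emap e) = vmap (G.src e)
  tgt_eq : ∀ e, G.tgt (emap e) = vmap (G.tgt e)

/-- `u` and `v` are in the same transitivity class. -/
def SameOrbit (u v : G.V) : Prop := ∃ φ : G.Aut, φ.vmap u = v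

/-- Finitely many transitivity classes. -/
def QuasiTransitive : Prop := ∃ S : Finset G.V, ∀ v : G.V, ∃ s ∈ S, G.SameOrbit s v

def VertexTransitive : Prop := ∀ u v : G.V, G.SameOrbit u v

/-- The orbit of `v` under the stabiliser of `u`. -/
def stabOrbit (u v : G.V) : Set G.V := {w | ∃ φ : G.Aut, φ.vmap u = u ∧ φ.vmap v = w}

/-- Unimodularity: the weight function is constant on transitivity classes,
equivalently `|stab(u)v| = |stab(v)u|` whenever `u, v` are in the same orbit. -/
def Unimodular : Prop := ∀ u v : G.V, G.SameOrbit u v →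
  Nat.card (G.stabOrbit u v) = Nat.card (G.stabOrbit v u)

/-- The edge-reversal of `G`. -/
def rev : Dgraph := ⟨G.V, G.E, G.tgt, G.src⟩

/-- Each edge has a reverse edge: `G` represents an undirected graph. -/
def Undirected : Prop := ∃ ι : G.E ≃ G.E, ∀ e : G.E,
  G.src (ι e) = G.tgt e ∧ G.tgt (ι e) = G.src e ∧ ι (ι e) = e

/-- An `n`-step self-avoiding walk starting at `v`, directed away from `v`. -/
@[ext]
structure SAW (n : ℕ) (v : G.V) where
  vs : Fin (n + 1) → G.V
  es : Fin n → G.E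
  hsrc : ∀ i : Fin n, G.src (es i) = vs i.castSucc
  htgt : ∀ i : Fin n, G.tgt (es i) = vs i.succ
  hstart : vs 0 = v
  hinj : Function.Injective vs

/-- `w` is an initial segment of a singly infinite SAW from `v`. -/
def IsFwdExt {n : ℕ} {v : G.V} (w : G.SAW n v) : Prop :=
  ∃ (vs : ℕ → G.V) (es : ℕ → G.E), Function.Injective vs ∧
    (∀ i : ℕ, G.src (es i) = vs i ∧ G.tgt (es i) = vs (i + 1)) ∧
    (∀ i : Fin (n + 1), vs i = w.vs i) ∧ (∀ i : Fin n, es i = w.es i)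

/-- `w` is the final segment of a singly infinite SAW from infinity ending at the
endpoint of `w` (indexed backwards from the endpoint). -/
def IsBwdExt {n : ℕ} {v : G.V} (w : G.SAW n v) : Prop :=
  ∃ (vs : ℕ → G.V) (es : ℕ → G.E), Function.Injective vs ∧
    (∀ i : ℕ, G.src (es i) = vs (i + 1) ∧ G.tgt (es i) = vs i) ∧
    (∀ i : Fin (n + 1), vs (n - (i : ℕ)) = w.vs i) ∧
    (∀ i : Fin n, es (n - 1 - (i : ℕ)) = w.es i)

/-- `w` is a sub-walk of a doubly infinite SAW. -/
def IsDblExt {n : ℕ} {v : G.V} (w : G.SAW n v) : Prop :=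
  ∃ (vs : ℤ → G.V) (es : ℤ → G.E), Function.Injective vs ∧
    (∀ i : ℤ, G.src (es i) = vs i ∧ G.tgt (es i) = vs (i + 1)) ∧
    ∃ k : ℤ, (∀ i : Fin (n + 1), vs (k + (i : ℕ)) = w.vs i) ∧
      (∀ i : Fin n, es (k + (i : ℕ)) = w.es i)

noncomputable def sigma (n : ℕ) (v : G.V) : ℕ := Nat.card (G.SAW n v)
noncomputable def sigmaF (n : ℕ) (v : G.V) : ℕ := Nat.card {w : G.SAW n v // G.IsFwdExt w}
noncomputable def sigmaB (n : ℕ) (v : G.V) : ℕ := Nat.card {w : G.SAW n v // G.IsBwdExt w}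
noncomputable def sigmaFB (n : ℕ) (v : G.V) : ℕ := Nat.card {w : G.SAW n v // G.IsDblExt w}

noncomputable def ssigma (n : ℕ) : ℝ≥0∞ := ⨆ v : G.V, (G.sigma n v : ℝ≥0∞)
noncomputable def ssigmaF (n : ℕ) : ℝ≥0∞ := ⨆ v : G.V, (G.sigmaF n v : ℝ≥0∞)
noncomputable def ssigmaB (n : ℕ) : ℝ≥0∞ := ⨆ v : G.V, (G.sigmaB n v : ℝ≥0∞)
noncomputable def ssigmaFB (n : ℕ) : ℝ≥0∞ := ⨆ v : G.V, (G.sigmaFB n v : ℝ≥0∞)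

/-- Undirected graph distance: length of a shortest path ignoring orientations. -/
noncomputable def udist (u v : G.V) : ℕ :=
  sInf {n : ℕ | ∃ f : Fin (n + 1) → G.V, f 0 = u ∧ f (Fin.last n) = v ∧
    ∀ i : Fin n, (∃ e, G.src e = f i.castSucc ∧ G.tgt e = f i.succ) ∨
      (∃ e, G.src e = f i.succ ∧ G.tgt e = f i.castSucc)}

end Dgraph

open Filter ENNReal

attribute [local instance] Classical.propDecidable


open Filter ENNReal

namespace Dgraph

variable {G : Dgraph}

lemma Aut.ext' {φ ψ : G.Aut} (h1 : φ.vmap = ψ.vmap) (h2 : φ.emap = ψ.emap) : φ = ψ := by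
  cases φ; cases ψ; simp_all

instance : Group G.Aut where
  mul φ ψ := ⟨ψ.vmap.trans φ.vmap, ψ.emap.trans φ.emap,
    fun e => by simp [φ.src_eq, ψ.src_eq], fun e => by simp [φ.tgt_eq, ψ.tgt_eq]⟩
  one := ⟨Equiv.refl _, Equiv.refl _, fun _ => rfl, fun _ => rfl⟩
  inv φ := ⟨φ.vmap.symm, φ.emap.symm,
    fun e => by
      apply φ.vmap.injective
      simp [← φ.src_eq],
    fun e => by
      apply φ.vmap.injective
      simp [← φ.tgt_eq]⟩
  mul_assoc a b c := Aut.ext' rfl rfl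
  one_mul a := Aut.ext' (by ext; rfl) (by ext; rfl)
  mul_one a := Aut.ext' (by ext; rfl) (by ext; rfl)
  inv_mul_cancel a := Aut.ext' (by ext x; exact a.vmap.symm_apply_apply x) (by ext x; exact a.emap.symm_apply_apply x)

@[simp] lemma mul_vmap (φ ψ : G.Aut) (v : G.V) : (φ * ψ).vmap v = φ.vmap (ψ.vmap v) := rfl
@[simp] lemma mul_emap (φ ψ : G.Aut) (e : G.E) : (φ * ψ).emap e = φ.emap (ψ.emap e) := rfl
@[simp] lemma one_vmap (v : G.V) : (1 : G.Aut).vmap v = v := rfl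
@[simp] lemma one_emap (e : G.E) : (1 : G.Aut).emap e = e := rfl
@[simp] lemma inv_vmap (φ : G.Aut) (v : G.V) : (φ⁻¹).vmap v = φ.vmap.symm v := rfl

instance : MulAction G.Aut G.V where
  smul φ v := φ.vmap v
  one_smul _ := rfl
  mul_smul _ _ _ := rfl

@[simp] lemma smul_def (φ : G.Aut) (v : G.V) : φ • v = φ.vmap v := rfl

end Dgraph
namespace Dgraph

variable {G : Dgraph}

def UAdj (G : Dgraph) (u v : G.V) : Prop :=
  (∃ e, G.src e = u ∧ G.tgt e = v) ∨ (∃ e, G.src e = v ∧ G.tgt e = u)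

lemma UAdj.symm {u v : G.V} (h : G.UAdj u v) : G.UAdj v u := h.elim Or.inr Or.inl

lemma UAdj.map {u v : G.V} (φ : G.Aut) (h : G.UAdj u v) : G.UAdj (φ.vmap u) (φ.vmap v) := by
  rcases h with ⟨e, h1, h2⟩ | ⟨e, h1, h2⟩
  · exact Or.inl ⟨φ.emap e, by simp [φ.src_eq, h1], by simp [φ.tgt_eq, h2]⟩
  · exact Or.inr ⟨φ.emap e, by simp [φ.src_eq, h1], by simp [φ.tgt_eq, h2]⟩

def Chain (G : Dgraph) (u v : G.V) (m : ℕ) : Prop :=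
  ∃ g : ℕ → G.V, g 0 = u ∧ g m = v ∧ ∀ i < m, G.UAdj (g i) (g (i + 1))

lemma chain_map {u v : G.V} {m : ℕ} (φ : G.Aut) (h : G.Chain u v m) :
    G.Chain (φ.vmap u) (φ.vmap v) m := by
  obtain ⟨g, h0, h1, h2⟩ := h
  exact ⟨φ.vmap ∘ g, by simp [h0], by simp [h1], fun i hi => (h2 i hi).map φ⟩

lemma chain_finite (hlf : G.LocallyFinite) (u : G.V) :
    ∀ m : ℕ, {v | G.Chain u v m}.Finite := by
  have hnbr : ∀ y : G.V, {z | G.UAdj y z}.Finite := by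
    intro y
    have : {z | G.UAdj y z} ⊆ (G.tgt '' {e | G.src e = y}) ∪ (G.src '' {e | G.tgt e = y}) := by
      rintro z (⟨e, h1, h2⟩ | ⟨e, h1, h2⟩)
      · exact Or.inl ⟨e, h1, h2⟩
      · exact Or.inr ⟨e, h2, h1⟩
    exact Set.Finite.subset (((hlf y).1.image _).union (((hlf y).2.image _))) this
  intro m
  induction m with
  | zero =>
    apply Set.Finite.subset (Set.finite_singleton u)
    rintro v ⟨g, h0, h1, -⟩
    simp [← h0, ← h1]
  | succ m ih =>
    apply Set.Finite.subset (ih.biUnion (fun y _ => hnbr y))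
    rintro v ⟨g, h0, h1, h2⟩
    have hm : g m ∈ {v | G.Chain u v m} := ⟨g, h0, rfl, fun i hi => h2 i (Nat.lt_succ_of_lt hi)⟩
    refine Set.mem_biUnion hm ?_
    show G.UAdj (g m) v
    rw [← h1]
    exact h2 m (Nat.lt_succ_self m)

def Ball (G : Dgraph) (u : G.V) (m : ℕ) : Set G.V := {v | ∃ k ≤ m, G.Chain u v k}

lemma ball_finite (hlf : G.LocallyFinite) (u : G.V) (m : ℕ) : (G.Ball u m).Finite := by
  have : G.Ball u m ⊆ ⋃ k ∈ Set.Iic m, {v | G.Chain u v k} := by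
    rintro v ⟨k, hk, hc⟩
    exact Set.mem_biUnion hk hc
  exact Set.Finite.subset ((Set.finite_Iic m).biUnion (fun k _ => chain_finite hlf u k)) this

lemma chain_of_sc (hsc : G.StronglyConnected) (u v : G.V) : ∃ m, G.Chain u v m := by
  have h := hsc u v
  induction h with
  | refl => exact ⟨0, fun _ => u, rfl, rfl, by omega⟩
  | @tail b c hab hbc ih =>
    obtain ⟨m, g, h0, h1, h2⟩ := ih
    refine ⟨m + 1, fun i => if i ≤ m then g i else c, by simp [h0], by simp, ?_⟩
    intro i hi
    rcases Nat.lt_or_ge i m with h | h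
    · simpa [Nat.le_of_lt h, Nat.succ_le_of_lt h] using h2 i h
    · have him : i = m := by omega
      show G.UAdj (if i ≤ m then g i else c) (if i + 1 ≤ m then g (i + 1) else c)
      rw [him, if_pos (le_refl m), if_neg (by omega), h1]
      exact Or.inl hbc

end Dgraph
section Generic

attribute [-instance] Classical.propDecidable

open MulAction

variable {X Y : Type*}

lemma ncard_eq_sum_fibers [DecidableEq Y] (A : Set X) (hA : A.Finite) (f : X → Y) :
    A.ncard = ∑ y ∈ (hA.image f).toFinset, ({x ∈ A | f x = y}).ncard := by
  have h1 : A.ncard = hA.toFinset.card := Set.ncard_eq_toFinset_card A hA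
  rw [h1, Finset.card_eq_sum_card_fiberwise (f := f) (t := (hA.image f).toFinset)
    (fun x hx => by simp only [Finset.mem_coe, Set.Finite.mem_toFinset] at hx ⊢; exact ⟨x, hx, rfl⟩)]
  refine Finset.sum_congr rfl (fun y _ => ?_)
  have : {x ∈ A | f x = y} = ↑(hA.toFinset.filter (fun a => f a = y)) := by
    ext z; simp [Set.Finite.mem_toFinset]
  rw [this, Set.ncard_coe_finset]

lemma ncard_eq_const_mul [DecidableEq Y] (A : Set X) (hA : A.Finite) (f : X → Y) (k : ℕ)
    (hk : ∀ y ∈ f '' A, ({x ∈ A | f x = y}).ncard = k) : A.ncard = (f '' A).ncard * k := by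
  rw [ncard_eq_sum_fibers A hA f,
    Finset.sum_congr rfl (fun y hy => hk y (by simpa [Set.Finite.mem_toFinset] using hy)),
    Finset.sum_const, smul_eq_mul]
  congr 1
  rw [Set.ncard_eq_toFinset_card (f '' A) (hA.image f)]

variable {Γ : Type*} [Group Γ] [MulAction Γ X] [MulAction Γ Y]

/-- The orbit of `x` under a subgroup. -/
def orb (H : Subgroup Γ) (x : X) : Set X := {z | ∃ h ∈ H, h • x = z}

lemma mem_orb_self (H : Subgroup Γ) (x : X) : x ∈ orb H x := ⟨1, H.one_mem, one_smul _ _⟩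

lemma orb_nonempty (H : Subgroup Γ) (x : X) : (orb H x).Nonempty := ⟨x, mem_orb_self H x⟩

lemma orb_mono {H K : Subgroup Γ} (h : H ≤ K) (x : X) : orb H x ⊆ orb K x :=
  fun _ ⟨a, ha, hax⟩ => ⟨a, h ha, hax⟩

lemma orb_smul_mem {H : Subgroup Γ} {a : Γ} (ha : a ∈ H) {x z : X} (hz : z ∈ orb H x) :
    a • z ∈ orb H x := by
  obtain ⟨b, hb, rfl⟩ := hz
  exact ⟨a * b, H.mul_mem ha hb, (mul_smul a b x).symm ▸ rfl⟩

lemma orb_conj_card (H K : Subgroup Γ) (g : Γ) (hK : ∀ a : Γ, a ∈ K ↔ g⁻¹ * a * g ∈ H)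
    (x : X) : (orb K (g • x)).ncard = (orb H x).ncard := by
  have himg : orb K (g • x) = (g • ·) '' orb H x := by
    ext z
    constructor
    · rintro ⟨a, ha, rfl⟩
      refine ⟨(g⁻¹ * a * g) • x, ⟨g⁻¹ * a * g, (hK a).mp ha, rfl⟩, ?_⟩
      simp [smul_smul, mul_assoc]
    · rintro ⟨w, ⟨h, hh, rfl⟩, rfl⟩
      have hsimp : g⁻¹ * (g * h * g⁻¹) * g = h := by group
      refine ⟨g * h * g⁻¹, (hK _).mpr (by rw [hsimp]; exact hh), ?_⟩
      simp [smul_smul, mul_assoc]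
  rw [himg, Set.ncard_image_of_injective _ (MulAction.injective g)]

lemma orb_fiber_eq (f : X → Y) (hf : ∀ (g : Γ) (x : X), f (g • x) = g • f x)
    (H : Subgroup Γ) (x : X) :
    {z ∈ orb H x | f z = f x} = orb (H ⊓ MulAction.stabilizer Γ (f x)) x := by
  ext z
  constructor
  · rintro ⟨⟨h, hh, rfl⟩, hfz⟩
    refine ⟨h, Subgroup.mem_inf.mpr ⟨hh, ?_⟩, rfl⟩
    rw [MulAction.mem_stabilizer_iff, ← hf h x, hfz]
  · rintro ⟨h, hmem, rfl⟩
    obtain ⟨hh, hst⟩ := Subgroup.mem_inf.mp hmem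
    exact ⟨⟨h, hh, rfl⟩, by rw [hf h x, MulAction.mem_stabilizer_iff.mp hst]⟩

lemma fib (f : X → Y) (hf : ∀ (g : Γ) (x : X), f (g • x) = g • f x)
    (H : Subgroup Γ) (x : X) (hfin : (orb H x).Finite) :
    (orb H x).ncard = (orb H (f x)).ncard * ({z ∈ orb H x | f z = f x}).ncard := by
  classical
  have himg : f '' orb H x = orb H (f x) := by
    ext y
    constructor
    · rintro ⟨z, ⟨h, hh, rfl⟩, rfl⟩
      exact ⟨h, hh, (hf h x).symm⟩
    · rintro ⟨h, hh, rfl⟩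
      exact ⟨h • x, ⟨h, hh, rfl⟩, hf h x⟩
  rw [← himg]
  apply ncard_eq_const_mul _ hfin
  intro y hy
  obtain ⟨z, ⟨a, ha, rfl⟩, rfl⟩ := hy
  have hset : {w ∈ orb H x | f w = f (a • x)} = (a • ·) '' {w ∈ orb H x | f w = f x} := by
    ext w
    constructor
    · rintro ⟨hw, hfw⟩
      refine ⟨a⁻¹ • w, ⟨orb_smul_mem (H.inv_mem ha) hw, ?_⟩, by simp⟩
      rw [hf, hfw, hf, inv_smul_smul]
    · rintro ⟨w', ⟨hw', hfw'⟩, rfl⟩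
      exact ⟨orb_smul_mem ha hw', by rw [hf, hfw', hf]⟩
  rw [hset, Set.ncard_image_of_injective _ (MulAction.injective a)]

end Generic
namespace Dgraph

open MulAction

variable {G : Dgraph}

lemma stabOrbit_eq (u v : G.V) :
    G.stabOrbit u v = orb (MulAction.stabilizer G.Aut u) v := by
  ext w
  constructor
  · rintro ⟨φ, h1, h2⟩
    exact ⟨φ, h1, h2⟩
  · rintro ⟨φ, h1, h2⟩
    exact ⟨φ, h1, h2⟩

/-- `|stab(u)·v|`. -/
noncomputable def sc (G : Dgraph) (u v : G.V) : ℕ :=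
  (orb (MulAction.stabilizer G.Aut u) v).ncard

lemma sc_eq_stabOrbit (u v : G.V) : G.sc u v = Nat.card (G.stabOrbit u v) := by
  rw [sc, ← stabOrbit_eq, Nat.card_coe_set_eq]

lemma sameOrbit_symm {u v : G.V} (h : G.SameOrbit u v) : G.SameOrbit v u := by
  obtain ⟨φ, hφ⟩ := h
  exact ⟨φ⁻¹, by rw [← hφ]; exact φ.vmap.symm_apply_apply u⟩

variable (hlf : G.LocallyFinite) (hsc : G.StronglyConnected)
include hlf hsc

lemma orb_finite {u : G.V} (H : Subgroup G.Aut) (hH : H ≤ MulAction.stabilizer G.Aut u)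
    (v : G.V) : (orb H v).Finite := by
  obtain ⟨m, hc⟩ := chain_of_sc hsc u v
  apply Set.Finite.subset (chain_finite hlf u m)
  rintro w ⟨φ, hφ, rfl⟩
  have h2 := chain_map φ hc
  rwa [show φ.vmap u = u from hH hφ] at h2

lemma orb_pair_finite {u : G.V} (H : Subgroup G.Aut) (hH : H ≤ MulAction.stabilizer G.Aut u)
    (v w : G.V) : (orb H ((v, w) : G.V × G.V)).Finite := by
  apply Set.Finite.subset ((orb_finite hlf hsc H hH v).prod (orb_finite hlf hsc H hH w))
  rintro z ⟨φ, hφ, rfl⟩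
  exact ⟨⟨φ, hφ, rfl⟩, ⟨φ, hφ, rfl⟩⟩

lemma sc_pos (u v : G.V) : 0 < G.sc u v := by
  rw [sc, Set.ncard_pos (orb_finite hlf hsc _ le_rfl v)]
  exact orb_nonempty _ _

end Dgraph
namespace Dgraph

open MulAction

variable {G : Dgraph}

/-- Orbit of `w` under `stab u ∩ stab v`. -/
noncomputable def e2 (G : Dgraph) (u v w : G.V) : ℕ :=
  (orb (MulAction.stabilizer G.Aut u ⊓ MulAction.stabilizer G.Aut v) w).ncard

lemma e2_symm (u v w : G.V) : G.e2 u v w = G.e2 v u w := by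
  rw [e2, e2, inf_comm]

lemma orb_pair_fst {v w : G.V} (K : Subgroup G.Aut) (hK : K ≤ MulAction.stabilizer G.Aut v) :
    orb K ((v, w) : G.V × G.V) = (fun z => (v, z)) '' orb K w := by
  ext z
  constructor
  · rintro ⟨φ, hφ, rfl⟩
    exact ⟨φ • w, ⟨φ, hφ, rfl⟩, by
      have : φ • v = v := hK hφ
      simp [Prod.smul_def, this]⟩
  · rintro ⟨z', ⟨φ, hφ, rfl⟩, rfl⟩
    refine ⟨φ, hφ, ?_⟩
    have : φ • v = v := hK hφ
    simp [Prod.smul_def, this]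

lemma orb_pair_snd {v w : G.V} (K : Subgroup G.Aut) (hK : K ≤ MulAction.stabilizer G.Aut w) :
    orb K ((v, w) : G.V × G.V) = (fun z => (z, w)) '' orb K v := by
  ext z
  constructor
  · rintro ⟨φ, hφ, rfl⟩
    exact ⟨φ • v, ⟨φ, hφ, rfl⟩, by
      have : φ • w = w := hK hφ
      simp [Prod.smul_def, this]⟩
  · rintro ⟨z', ⟨φ, hφ, rfl⟩, rfl⟩
    refine ⟨φ, hφ, ?_⟩
    have : φ • w = w := hK hφ
    simp [Prod.smul_def, this]

variable (hlf : G.LocallyFinite) (hcon : G.StronglyConnected)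
include hlf hcon

lemma pair_decomp (a v w : G.V) :
    (orb (MulAction.stabilizer G.Aut a) ((v, w) : G.V × G.V)).ncard
      = G.sc a v * G.e2 a v w ∧
    (orb (MulAction.stabilizer G.Aut a) ((v, w) : G.V × G.V)).ncard
      = G.sc a w * G.e2 a w v := by
  set H := MulAction.stabilizer G.Aut a
  have hfin := orb_pair_finite hlf hcon H le_rfl v w
  constructor
  · have h1 := fib (Prod.fst : G.V × G.V → G.V) (fun g x => rfl) H ((v, w)) hfin
    rw [orb_fiber_eq (Prod.fst : G.V × G.V → G.V) (fun g x => rfl) H ((v, w))] at h1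
    rw [h1]
    congr 1
    rw [orb_pair_fst (H ⊓ MulAction.stabilizer G.Aut v) inf_le_right,
      Set.ncard_image_of_injective _ (fun x y h => by simpa using h)]
    rfl
  · have h1 := fib (Prod.snd : G.V × G.V → G.V) (fun g x => rfl) H ((v, w)) hfin
    rw [orb_fiber_eq (Prod.snd : G.V × G.V → G.V) (fun g x => rfl) H ((v, w))] at h1
    rw [h1]
    congr 1
    rw [orb_pair_snd (H ⊓ MulAction.stabilizer G.Aut w) inf_le_right,
      Set.ncard_image_of_injective _ (fun x y h => by simpa using h)]
    rfl

lemma cocycle (a b x : G.V) :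
    G.sc a b * G.sc b x * G.sc x a = G.sc b a * G.sc x b * G.sc a x := by
  have E1 : G.sc a b * G.e2 a b x = G.sc a x * G.e2 x a b := by
    have h := pair_decomp hlf hcon a b x
    rw [← h.1, h.2, e2_symm]
  have E2 : G.sc b x * G.e2 b x a = G.sc b a * G.e2 a b x := by
    have h := pair_decomp hlf hcon b x a
    rw [← h.1, h.2, e2_symm]
  have E3 : G.sc x a * G.e2 x a b = G.sc x b * G.e2 b x a := by
    have h := pair_decomp hlf hcon x a b
    rw [← h.1, h.2, e2_symm]
  have hpos : 0 < G.e2 a b x * G.e2 b x a * G.e2 x a b := by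
    have hp : ∀ u v w : G.V, 0 < G.e2 u v w := by
      intro u v w
      rw [e2, Set.ncard_pos (Set.Finite.subset (orb_finite hlf hcon _ le_rfl w)
        (orb_mono inf_le_left w))]
      exact orb_nonempty _ _
    exact Nat.mul_pos (Nat.mul_pos (hp a b x) (hp b x a)) (hp x a b)
  apply Nat.eq_of_mul_eq_mul_right hpos
  calc G.sc a b * G.sc b x * G.sc x a * (G.e2 a b x * G.e2 b x a * G.e2 x a b)
      = (G.sc a b * G.e2 a b x) * ((G.sc b x * G.e2 b x a) * (G.sc x a * G.e2 x a b)) := by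
        ring
    _ = (G.sc a x * G.e2 x a b) * ((G.sc b a * G.e2 a b x) * (G.sc x b * G.e2 b x a)) := by
        rw [E1, E2, E3]
    _ = G.sc b a * G.sc x b * G.sc a x * (G.e2 a b x * G.e2 b x a * G.e2 x a b) := by ring

lemma cocycle_unimod (huni : G.Unimodular) {a b x : G.V} (hbx : G.SameOrbit b x) :
    G.sc b a * G.sc a x = G.sc a b * G.sc x a := by
  have hc := cocycle hlf hcon a b x
  have hu : G.sc b x = G.sc x b := by
    rw [sc_eq_stabOrbit, sc_eq_stabOrbit]
    exact huni b x hbx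
  have hpos := sc_pos hlf hcon b x
  apply Nat.eq_of_mul_eq_mul_right hpos
  calc G.sc b a * G.sc a x * G.sc b x = G.sc b a * G.sc x b * G.sc a x := by rw [hu]; ring
    _ = G.sc a b * G.sc b x * G.sc x a := hc.symm
    _ = G.sc a b * G.sc x a * G.sc b x := by ring

omit hlf hcon in
lemma sc_le_sup (S : Finset G.V) {oa b : G.V} (hoa : oa ∈ S) (hbS : b ∈ S) :
    G.sc oa b ≤ (S ×ˢ S).sup (fun q => G.sc q.1 q.2) :=
  Finset.le_sup (α := ℕ) (β := G.V × G.V) (s := S ×ˢ S) (b := (oa, b))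
    (f := fun q : G.V × G.V => G.sc q.1 q.2) (Finset.mem_product.mpr ⟨hoa, hbS⟩)

end Dgraph
namespace Dgraph

open MulAction

variable {G : Dgraph}

/-- A forward-extendable `n`-step SAW, not anchored at a vertex. -/
@[ext]
structure FW (G : Dgraph) (n : ℕ) where
  vs : Fin (n + 1) → G.V
  es : Fin n → G.E
  hsrc : ∀ i : Fin n, G.src (es i) = vs i.castSucc
  htgt : ∀ i : Fin n, G.tgt (es i) = vs i.succ
  hinj : Function.Injective vs
  hext : ∃ (vs' : ℕ → G.V) (es' : ℕ → G.E), Function.Injective vs' ∧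
    (∀ i : ℕ, G.src (es' i) = vs' i ∧ G.tgt (es' i) = vs' (i + 1)) ∧
    (∀ i : Fin (n + 1), vs' i = vs i) ∧ (∀ i : Fin n, es' i = es i)

variable {n : ℕ}

def fws (p : G.FW n) : G.V := p.vs 0
def fwt (p : G.FW n) : G.V := p.vs (Fin.last n)

def FW.map (φ : G.Aut) (p : G.FW n) : G.FW n where
  vs := φ.vmap ∘ p.vs
  es := φ.emap ∘ p.es
  hsrc i := by simp [φ.src_eq, p.hsrc i]
  htgt i := by simp [φ.tgt_eq, p.htgt i]
  hinj := φ.vmap.injective.comp p.hinj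
  hext := by
    obtain ⟨vs', es', h1, h2, h3, h4⟩ := p.hext
    exact ⟨φ.vmap ∘ vs', φ.emap ∘ es', φ.vmap.injective.comp h1,
      fun i => ⟨by simp [φ.src_eq, (h2 i).1], by simp [φ.tgt_eq, (h2 i).2]⟩,
      fun i => by simp [h3 i], fun i => by simp [h4 i]⟩

instance : MulAction G.Aut (G.FW n) where
  smul φ p := p.map φ
  one_smul p := by apply FW.ext <;> rfl
  mul_smul φ ψ p := by apply FW.ext <;> rfl

@[simp] lemma smul_vs (φ : G.Aut) (p : G.FW n) (j : Fin (n + 1)) :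
    (φ • p).vs j = φ.vmap (p.vs j) := rfl
@[simp] lemma smul_es (φ : G.Aut) (p : G.FW n) (i : Fin n) :
    (φ • p).es i = φ.emap (p.es i) := rfl

lemma fws_smul (φ : G.Aut) (p : G.FW n) : fws (φ • p) = φ • fws p := rfl
lemma fwt_smul (φ : G.Aut) (p : G.FW n) : fwt (φ • p) = φ • fwt p := rfl

/-- The walk gives chains from the start to each of its vertices. -/
lemma fw_chain (p : G.FW n) (j : Fin (n + 1)) : G.Chain (fws p) (p.vs j) (j : ℕ) := by
  refine ⟨fun i => p.vs ⟨min i n, by omega⟩,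
    congrArg p.vs (Fin.ext (by simp)),
    congrArg p.vs (Fin.ext (by simp [Nat.min_eq_left (Fin.is_le j)])), ?_⟩
  intro i hi
  have hjn : (j : ℕ) ≤ n := Fin.is_le j
  have hin : i < n := by omega
  left
  refine ⟨p.es ⟨i, hin⟩, ?_, ?_⟩
  · rw [p.hsrc]
    exact congrArg p.vs (Fin.ext (by simp [Nat.min_eq_left hin.le]))
  · rw [p.htgt]
    exact congrArg p.vs (Fin.ext (by simp [Nat.min_eq_left (Nat.succ_le_of_lt hin)]))

lemma chain_symm {u v : G.V} {m : ℕ} (h : G.Chain u v m) : G.Chain v u m := by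
  obtain ⟨g, h0, h1, h2⟩ := h
  refine ⟨fun i => g (m - i), by simp [h1], by simp [h0], ?_⟩
  intro i hi
  have h3 := h2 (m - (i + 1)) (by omega)
  have h4 : m - (i + 1) + 1 = m - i := by omega
  rw [h4] at h3
  exact h3.symm

lemma fw_chain_st (p : G.FW n) : G.Chain (fws p) (fwt p) n := by
  simpa [fwt] using fw_chain p (Fin.last n)

variable (hlf : G.LocallyFinite)
include hlf

lemma sfiber_finite (u : G.V) : {p : G.FW n | fws p = u}.Finite := by
  rcases Nat.eq_zero_or_pos n with hn | hn
  · subst hn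
    apply Set.Subsingleton.finite
    intro p hp q hq
    apply FW.ext
    · funext j
      have hj : j = 0 := Fin.ext (by omega)
      rw [hj]; exact hp.trans hq.symm
    · funext i; exact i.elim0
  · have hEb : {e : G.E | G.src e ∈ G.Ball u n}.Finite := by
      have : {e : G.E | G.src e ∈ G.Ball u n} ⊆ ⋃ x ∈ G.Ball u n, {e | G.src e = x} := by
        intro e he; exact Set.mem_biUnion he rfl
      exact Set.Finite.subset ((ball_finite hlf u n).biUnion (fun x _ => (hlf x).1)) this
    have : Finite ↥{p : G.FW n | fws p = u} := by
      have hEb' : Finite ↥{e : G.E | G.src e ∈ G.Ball u n} := hEb.to_subtype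
      refine Finite.of_injective
        (fun p => (fun i => ⟨p.1.es i, ?_⟩ : Fin n → ↥{e : G.E | G.src e ∈ G.Ball u n})) ?_
      · simp only [Set.mem_setOf_eq, p.1.hsrc]
        refine ⟨(i.castSucc : ℕ), by simp, ?_⟩
        have := fw_chain p.1 i.castSucc
        rwa [p.2] at this
      · intro p q h
        have hes : p.1.es = q.1.es := funext fun i => congrArg Subtype.val (congrFun h i)
        have hvs : p.1.vs = q.1.vs := by
          funext j
          rcases Nat.lt_or_ge (j : ℕ) n with hj | hj
          · have hp := p.1.hsrc ⟨j, hj⟩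
            have hq := q.1.hsrc ⟨j, hj⟩
            have hcast : (⟨(j : ℕ), hj⟩ : Fin n).castSucc = j := Fin.ext rfl
            rw [hcast] at hp hq
            rw [← hp, ← hq, hes]
          · have hj' : (j : ℕ) = n := by omega
            have hlast : (⟨n - 1, by omega⟩ : Fin n).succ = j :=
              Fin.ext (by simp [hj']; omega)
            have h1 : p.1.vs j = G.tgt (p.1.es ⟨n - 1, by omega⟩) := by
              rw [p.1.htgt ⟨n - 1, by omega⟩, hlast]
            have h2 : q.1.vs j = G.tgt (q.1.es ⟨n - 1, by omega⟩) := by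
              rw [q.1.htgt ⟨n - 1, by omega⟩, hlast]
            rw [h1, h2, hes]
        exact Subtype.ext (FW.ext hvs hes)
    exact Set.finite_coe_iff.mp this

lemma tfiber_finite (v : G.V) : {p : G.FW n | fwt p = v}.Finite := by
  have hsub : {p : G.FW n | fwt p = v} ⊆ ⋃ y ∈ G.Ball v n, {p : G.FW n | fws p = y} := by
    intro p hp
    have hc : G.Chain v (fws p) n := by
      have := chain_symm (fw_chain_st p)
      rwa [hp] at this
    exact Set.mem_biUnion ⟨n, le_rfl, hc⟩ rfl
  exact Set.Finite.subset ((ball_finite hlf v n).biUnion (fun y _ => sfiber_finite hlf y)) hsub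

end Dgraph
namespace Dgraph

open MulAction

variable {G : Dgraph} {n : ℕ}

lemma sigmaF_eq (n : ℕ) (u : G.V) : G.sigmaF n u = {p : G.FW n | fws p = u}.ncard := by
  rw [sigmaF, ← Nat.card_coe_set_eq]
  apply Nat.card_congr
  exact {
    toFun := fun w => ⟨⟨w.1.vs, w.1.es, w.1.hsrc, w.1.htgt, w.1.hinj, w.2⟩, w.1.hstart⟩
    invFun := fun p => ⟨⟨p.1.vs, p.1.es, p.1.hsrc, p.1.htgt, p.2, p.1.hinj⟩, p.1.hext⟩
    left_inv := fun w => rfl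
    right_inv := fun p => rfl }

/-- Reversal: backward-extendable SAWs in `G.rev` from `v` correspond to
forward-extendable walks in `G` ending at `v`. -/
lemma sigmaB_eq (n : ℕ) (v : G.V) :
    (G.rev).sigmaB n v = {p : G.FW n | fwt p = v}.ncard := by
  show Nat.card {w : (G.rev).SAW n v // (G.rev).IsBwdExt w} = _
  rw [← Nat.card_coe_set_eq]
  apply Nat.card_congr
  refine {
    toFun := fun w => ⟨⟨fun j => w.1.vs j.rev, fun i => w.1.es i.rev, ?_, ?_, ?_, ?_⟩, ?_⟩
    invFun := fun p => ⟨⟨fun j => p.1.vs j.rev, fun i => p.1.es i.rev, ?_, ?_, ?_, ?_⟩, ?_⟩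
    left_inv := ?_
    right_inv := ?_ }
  · intro i
    show G.rev.tgt (w.1.es i.rev) = w.1.vs i.castSucc.rev
    rw [Fin.rev_castSucc]
    exact w.1.htgt i.rev
  · intro i
    show G.rev.src (w.1.es i.rev) = w.1.vs i.succ.rev
    rw [Fin.rev_succ]
    exact w.1.hsrc i.rev
  · exact w.1.hinj.comp (fun a b h => Fin.rev_injective h)
  · obtain ⟨vs', es', h1, h2, h3, h4⟩ := w.2
    refine ⟨vs', es', h1, fun i => ⟨(h2 i).2, (h2 i).1⟩, ?_, ?_⟩
    · intro j
      have hj : (j : ℕ) ≤ n := Fin.is_le j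
      have := h3 j.rev
      have hco : n - ((j.rev : ℕ)) = (j : ℕ) := by
        rw [Fin.val_rev]; omega
      rwa [← hco]
    · intro i
      have hi : (i : ℕ) < n := i.is_lt
      have := h4 i.rev
      have hco : n - 1 - ((i.rev : ℕ)) = (i : ℕ) := by
        rw [Fin.val_rev]; omega
      rwa [← hco]
  · show w.1.vs (Fin.last n).rev = v
    rw [Fin.rev_last]
    exact w.1.hstart
  · intro i
    show G.tgt (p.1.es i.rev) = p.1.vs i.castSucc.rev
    rw [Fin.rev_castSucc]
    exact p.1.htgt i.rev
  · intro i
    show G.src (p.1.es i.rev) = p.1.vs i.succ.rev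
    rw [Fin.rev_succ]
    exact p.1.hsrc i.rev
  · show p.1.vs (0 : Fin (n+1)).rev = v
    rw [Fin.rev_zero]
    exact p.2
  · exact p.1.hinj.comp (fun a b h => Fin.rev_injective h)
  · obtain ⟨vs', es', h1, h2, h3, h4⟩ := p.1.hext
    refine ⟨vs', es', h1, fun i => ⟨(h2 i).2, (h2 i).1⟩, ?_, ?_⟩
    · intro j
      have := h3 j.rev
      rwa [Fin.val_rev, show n + 1 - ((j:ℕ) + 1) = n - (j : ℕ) from by omega] at this
    · intro i
      have := h4 i.rev
      rwa [Fin.val_rev, show n - ((i:ℕ) + 1) = n - 1 - (i : ℕ) from by omega] at this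
  · intro w
    apply Subtype.ext
    apply SAW.ext
    · funext j; simp [Fin.rev_rev]
    · funext i; simp [Fin.rev_rev]
  · intro p
    apply Subtype.ext
    apply FW.ext
    · funext j; simp [Fin.rev_rev]
    · funext i; simp [Fin.rev_rev]

end Dgraph
namespace Dgraph

open MulAction

variable {G : Dgraph} {n : ℕ}

lemma orb_top_eq_of_mem {X : Type*} [MulAction G.Aut X] {p w : X}
    (h : p ∈ orb (⊤ : Subgroup G.Aut) w) :
    orb (⊤ : Subgroup G.Aut) p = orb (⊤ : Subgroup G.Aut) w := by
  obtain ⟨φ, -, rfl⟩ := h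
  ext z
  constructor
  · rintro ⟨a, -, rfl⟩
    exact ⟨a * φ, trivial, (mul_smul a φ w)⟩
  · rintro ⟨a, -, rfl⟩
    exact ⟨a * φ⁻¹, trivial, by rw [mul_smul, inv_smul_smul]⟩

lemma class_inter_s (o : G.V) (w : G.FW n) (hw : fws w = o) :
    {p ∈ orb (⊤ : Subgroup G.Aut) w | fws p = o}
      = orb (MulAction.stabilizer G.Aut o) w := by
  ext p
  constructor
  · rintro ⟨⟨φ, -, rfl⟩, hp⟩
    refine ⟨φ, ?_, rfl⟩
    rw [MulAction.mem_stabilizer_iff, ← hw]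
    exact hp.trans hw.symm
  · rintro ⟨φ, hφ, rfl⟩
    refine ⟨⟨φ, trivial, rfl⟩, ?_⟩
    show φ • fws w = o
    rw [hw]
    exact hφ

lemma class_inter_t (o : G.V) (w : G.FW n) (hw : fwt w = o) :
    {p ∈ orb (⊤ : Subgroup G.Aut) w | fwt p = o}
      = orb (MulAction.stabilizer G.Aut o) w := by
  ext p
  constructor
  · rintro ⟨⟨φ, -, rfl⟩, hp⟩
    refine ⟨φ, ?_, rfl⟩
    rw [MulAction.mem_stabilizer_iff, ← hw]
    exact hp.trans hw.symm
  · rintro ⟨φ, hφ, rfl⟩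
    refine ⟨⟨φ, trivial, rfl⟩, ?_⟩
    show φ • fwt w = o
    rw [hw]
    exact hφ

variable (hlf : G.LocallyFinite) (hcon : G.StronglyConnected)
include hlf hcon

lemma orb_stab_s_finite (o : G.V) (w : G.FW n) (hw : fws w = o) :
    (orb (MulAction.stabilizer G.Aut o) w).Finite := by
  apply Set.Finite.subset (sfiber_finite hlf o)
  rintro p ⟨φ, hφ, rfl⟩
  show φ • fws w = o
  rw [hw]
  exact hφ

omit hlf hcon in
lemma smul_stab_iff {X : Type*} [MulAction G.Aut X] (φ a : G.Aut) (z : X) :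
    a • (φ • z) = φ • z ↔ (φ⁻¹ * a * φ) • z = z := by
  constructor
  · intro h
    rw [mul_smul, mul_smul, h, inv_smul_smul]
  · intro h
    calc a • φ • z = φ • ((φ⁻¹ * a * φ) • z) := by rw [mul_smul, mul_smul, smul_inv_smul]
      _ = φ • z := by rw [h]

lemma key_orbit (huni : G.Unimodular) (oa ob : G.V) (w : G.FW n)
    (ha : fws w = oa) (hbx : G.SameOrbit ob (fwt w)) :
    G.sc ob oa * {p ∈ orb (⊤ : Subgroup G.Aut) w | fws p = oa}.ncard
      = G.sc oa ob * {p ∈ orb (⊤ : Subgroup G.Aut) w | fwt p = ob}.ncard := by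
  set x := fwt w with hx
  obtain ⟨φ, hφ⟩ := sameOrbit_symm hbx
  have hφ' : φ • x = ob := hφ
  set w' := φ • w with hw'
  have hw't : fwt w' = ob := by rw [hw', fwt_smul, ← hφ']
  have hw's : fws w' = φ • oa := by rw [hw', fws_smul, ha]
  rw [class_inter_s oa w ha]
  have horb : orb (⊤ : Subgroup G.Aut) w = orb (⊤ : Subgroup G.Aut) w' := by
    exact (orb_top_eq_of_mem ⟨φ, trivial, rfl⟩).symm
  rw [horb, class_inter_t ob w' hw't]
  have hfinL := orb_stab_s_finite hlf hcon oa w ha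
  have hL := fib fwt (fun g p => rfl) (MulAction.stabilizer G.Aut oa) w hfinL
  rw [orb_fiber_eq fwt (fun g p => rfl) (MulAction.stabilizer G.Aut oa) w] at hL
  have hfinR : (orb (MulAction.stabilizer G.Aut ob) w').Finite := by
    apply Set.Finite.subset (tfiber_finite hlf ob)
    rintro p ⟨ψ, hψ, rfl⟩
    show ψ • fwt w' = ob
    rw [hw't]
    exact hψ
  have hR := fib fws (fun g p => rfl) (MulAction.stabilizer G.Aut ob) w' hfinR
  rw [orb_fiber_eq fws (fun g p => rfl) (MulAction.stabilizer G.Aut ob) w'] at hR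
  rw [hL, hR]
  have hK : (orb (MulAction.stabilizer G.Aut ob ⊓ MulAction.stabilizer G.Aut (fws w')) w').ncard
      = (orb (MulAction.stabilizer G.Aut oa ⊓ MulAction.stabilizer G.Aut (fwt w)) w).ncard := by
    rw [hw']
    apply orb_conj_card _ _ φ
    intro a
    rw [Subgroup.mem_inf, Subgroup.mem_inf]
    simp only [MulAction.mem_stabilizer_iff]
    rw [hw's, ← hφ', ← hx]
    constructor
    · rintro ⟨h1, h2⟩
      exact ⟨(smul_stab_iff φ a oa).mp h2, (smul_stab_iff φ a x).mp h1⟩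
    · rintro ⟨h1, h2⟩
      exact ⟨(smul_stab_iff φ a x).mpr h2, (smul_stab_iff φ a oa).mpr h1⟩
  have hconj : (orb (MulAction.stabilizer G.Aut ob) (fws w')).ncard
      = (orb (MulAction.stabilizer G.Aut x) oa).ncard := by
    rw [hw's, ← hφ']
    apply orb_conj_card _ _ φ
    intro a
    rw [MulAction.mem_stabilizer_iff, MulAction.mem_stabilizer_iff]
    exact smul_stab_iff φ a x
  rw [hK, hconj]
  have hcc : G.sc ob oa * G.sc oa x = G.sc oa ob * G.sc x oa :=
    cocycle_unimod hlf hcon huni hbx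
  show G.sc ob oa * (G.sc oa x
      * (orb (MulAction.stabilizer G.Aut oa ⊓ MulAction.stabilizer G.Aut x) w).ncard)
    = G.sc oa ob * (G.sc x oa
      * (orb (MulAction.stabilizer G.Aut oa ⊓ MulAction.stabilizer G.Aut x) w).ncard)
  rw [← mul_assoc, ← mul_assoc, hcc]

end Dgraph
set_option maxHeartbeats 1000000

namespace Dgraph

open MulAction

variable {G : Dgraph} {n : ℕ}

lemma sum_inter_ncard_le {ι X : Type*} (J : Finset ι) (F : ι → Set X)
    (hd : ∀ i ∈ J, ∀ j ∈ J, i ≠ j → Disjoint (F i) (F j)) :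
    ∀ (T : Set X), T.Finite → ∑ i ∈ J, (F i ∩ T).ncard ≤ T.ncard := by
  classical
  induction J using Finset.induction_on with
  | empty => simp
  | insert _ _ hni ih =>
    rename_i O J'
    intro T hT
    rw [Finset.sum_insert hni]
    have hsub : ∀ j ∈ J', F j ∩ T ⊆ F j ∩ (T \ F O) := by
      intro j hj z hz
      refine ⟨hz.1, hz.2, ?_⟩
      have hdis := hd O (Finset.mem_insert_self _ _) j (Finset.mem_insert_of_mem hj)
        (fun h => hni (h ▸ hj))
      exact fun hzO => (Set.disjoint_left.mp hdis hzO) hz.1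
    have hih : ∑ j ∈ J', (F j ∩ (T \ F O)).ncard ≤ (T \ F O).ncard :=
      ih (fun i hi j hj hij => hd i (Finset.mem_insert_of_mem hi) j
        (Finset.mem_insert_of_mem hj) hij) (T \ F O) (hT.subset Set.diff_subset)
    have hmono : ∑ j ∈ J', (F j ∩ T).ncard ≤ ∑ j ∈ J', (F j ∩ (T \ F O)).ncard :=
      Finset.sum_le_sum (fun j hj => Set.ncard_le_ncard (hsub j hj)
        ((hT.subset Set.diff_subset).subset Set.inter_subset_right))
    have hsplit : (F O ∩ T).ncard + (T \ F O).ncard = T.ncard := by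
      rw [← Set.ncard_union_eq (Set.disjoint_left.mpr (fun z hz hz' => hz'.2 hz.1))
        (hT.subset Set.inter_subset_right) (hT.subset Set.diff_subset)]
      congr 1
      ext z
      constructor
      · rintro (⟨h1, h2⟩ | ⟨h1, h2⟩) <;> exact ‹z ∈ T›
      · intro hz
        by_cases hzO : z ∈ F O
        · exact Or.inl ⟨hzO, hz⟩
        · exact Or.inr ⟨hz, hzO⟩
    omega

lemma orbits_disjoint {X : Type*} [MulAction G.Aut X] {O O' : Set X}
    (hO : ∃ w, O = orb (⊤ : Subgroup G.Aut) w) (hO' : ∃ w, O' = orb (⊤ : Subgroup G.Aut) w)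
    (hne : O ≠ O') : Disjoint O O' := by
  obtain ⟨w, rfl⟩ := hO
  obtain ⟨w', rfl⟩ := hO'
  rw [Set.disjoint_left]
  intro z hz hz'
  exact hne ((orb_top_eq_of_mem hz).symm.trans (orb_top_eq_of_mem hz'))

variable (hlf : G.LocallyFinite) (hcon : G.StronglyConnected)
include hlf hcon

lemma count_bound_s (huni : G.Unimodular) (S : Finset G.V)
    (hS : ∀ v : G.V, ∃ s ∈ S, G.SameOrbit s v) {oa : G.V} (hoa : oa ∈ S) (n : ℕ) :
    {p : G.FW n | fws p = oa}.ncard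
      ≤ (S ×ˢ S).sup (fun q => G.sc q.1 q.2)
        * ∑ b ∈ S, {p : G.FW n | fwt p = b}.ncard := by
  classical
  set Amax := (S ×ˢ S).sup (fun q => G.sc q.1 q.2) with hAm
  set A := {p : G.FW n | fws p = oa} with hA
  have hAfin : A.Finite := sfiber_finite hlf oa
  set f : G.FW n → Set (G.FW n) := fun p => orb (⊤ : Subgroup G.Aut) p with hf
  rw [ncard_eq_sum_fibers A hAfin f]
  set I := (hAfin.image f).toFinset with hI
  have hdisj : ∀ O ∈ I, ∀ O' ∈ I, O ≠ O' → Disjoint O O' := by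
    intro O hO O' hO' hne
    rw [hI, Set.Finite.mem_toFinset] at hO hO'
    obtain ⟨w, -, hw⟩ := hO
    obtain ⟨w', -, hw'⟩ := hO'
    exact orbits_disjoint ⟨w, hw.symm⟩ ⟨w', hw'.symm⟩ hne
  have hwit : ∀ O ∈ I, {x ∈ A | f x = O}.ncard
      ≤ Amax * ∑ b ∈ S, (O ∩ {p : G.FW n | fwt p = b}).ncard := by
    intro O hO
    rw [hI, Set.Finite.mem_toFinset] at hO
    obtain ⟨w, hwA, hfw⟩ := hO
    obtain ⟨b, hbS, hsame⟩ := hS (fwt w)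
    have hkey := key_orbit hlf hcon huni oa b w hwA hsame
    have hset1 : {x ∈ A | f x = O} = {p ∈ orb (⊤ : Subgroup G.Aut) w | fws p = oa} := by
      rw [← hfw]
      ext z
      simp only [Set.mem_setOf_eq, hA, hf]
      constructor
      · rintro ⟨hz1, hz2⟩
        exact ⟨hz2 ▸ mem_orb_self _ z, hz1⟩
      · rintro ⟨hz1, hz2⟩
        exact ⟨hz2, orb_top_eq_of_mem hz1⟩
    have hset2 : {p ∈ orb (⊤ : Subgroup G.Aut) w | fwt p = b}
        = O ∩ {p : G.FW n | fwt p = b} := by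
      rw [← hfw]
      ext z
      constructor
      · rintro ⟨h1, h2⟩
        exact ⟨h1, h2⟩
      · rintro ⟨h1, h2⟩
        exact ⟨h1, h2⟩
    calc {x ∈ A | f x = O}.ncard
        ≤ G.sc b oa * {x ∈ A | f x = O}.ncard :=
          Nat.le_mul_of_pos_left _ (sc_pos hlf hcon b oa)
      _ = G.sc oa b * (O ∩ {p : G.FW n | fwt p = b}).ncard := by
          rw [hset1, hkey, hset2]
      _ ≤ Amax * (O ∩ {p : G.FW n | fwt p = b}).ncard :=
          Nat.mul_le_mul_right _ (sc_le_sup S hoa hbS)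
      _ ≤ Amax * ∑ b' ∈ S, (O ∩ {p : G.FW n | fwt p = b'}).ncard := by
          apply mul_le_mul_right
          exact Finset.single_le_sum (f := fun b' => (O ∩ {p : G.FW n | fwt p = b'}).ncard)
            (fun _ _ => Nat.zero_le _) hbS
  calc ∑ O ∈ I, {x ∈ A | f x = O}.ncard
      ≤ ∑ O ∈ I, Amax * ∑ b ∈ S, (O ∩ {p : G.FW n | fwt p = b}).ncard :=
        Finset.sum_le_sum hwit
    _ = Amax * ∑ b ∈ S, ∑ O ∈ I, (O ∩ {p : G.FW n | fwt p = b}).ncard := by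
        rw [← Finset.mul_sum, Finset.sum_comm]
    _ ≤ Amax * ∑ b ∈ S, {p : G.FW n | fwt p = b}.ncard := by
        apply mul_le_mul_right
        apply Finset.sum_le_sum
        intro b _
        exact sum_inter_ncard_le I (fun O => O) hdisj _ (tfiber_finite hlf b)

end Dgraph
namespace Dgraph

open MulAction

variable {G : Dgraph} {n : ℕ}

lemma sfiber_ncard_smul (φ : G.Aut) (u : G.V) :
    {p : G.FW n | fws p = φ • u}.ncard = {p : G.FW n | fws p = u}.ncard := by
  have himg : {p : G.FW n | fws p = φ • u} = (fun p => φ • p) '' {p : G.FW n | fws p = u} := by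
    ext p
    constructor
    · intro hp
      refine ⟨φ⁻¹ • p, ?_, smul_inv_smul φ p⟩
      show fws (φ⁻¹ • p) = u
      rw [fws_smul, hp, inv_smul_smul]
    · rintro ⟨q, hq, rfl⟩
      show fws (φ • q) = φ • u
      rw [fws_smul, hq]
  rw [himg, Set.ncard_image_of_injective _ (MulAction.injective φ)]

lemma tfiber_ncard_smul (φ : G.Aut) (u : G.V) :
    {p : G.FW n | fwt p = φ • u}.ncard = {p : G.FW n | fwt p = u}.ncard := by
  have himg : {p : G.FW n | fwt p = φ • u} = (fun p => φ • p) '' {p : G.FW n | fwt p = u} := by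
    ext p
    constructor
    · intro hp
      refine ⟨φ⁻¹ • p, ?_, smul_inv_smul φ p⟩
      show fwt (φ⁻¹ • p) = u
      rw [fwt_smul, hp, inv_smul_smul]
    · rintro ⟨q, hq, rfl⟩
      show fwt (φ • q) = φ • u
      rw [fwt_smul, hq]
  rw [himg, Set.ncard_image_of_injective _ (MulAction.injective φ)]

variable (hlf : G.LocallyFinite) (hcon : G.StronglyConnected)
include hlf hcon

lemma count_bound_t (huni : G.Unimodular) (S : Finset G.V)
    (hS : ∀ v : G.V, ∃ s ∈ S, G.SameOrbit s v) {ob : G.V} (hob : ob ∈ S) (n : ℕ) :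
    {p : G.FW n | fwt p = ob}.ncard
      ≤ (S ×ˢ S).sup (fun q => G.sc q.1 q.2)
        * ∑ a ∈ S, {p : G.FW n | fws p = a}.ncard := by
  classical
  set Amax := (S ×ˢ S).sup (fun q => G.sc q.1 q.2) with hAm
  set B := {p : G.FW n | fwt p = ob} with hB
  have hBfin : B.Finite := tfiber_finite hlf ob
  set f : G.FW n → Set (G.FW n) := fun p => orb (⊤ : Subgroup G.Aut) p with hf
  rw [ncard_eq_sum_fibers B hBfin f]
  set I := (hBfin.image f).toFinset with hI
  have hdisj : ∀ O ∈ I, ∀ O' ∈ I, O ≠ O' → Disjoint O O' := by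
    intro O hO O' hO' hne
    rw [hI, Set.Finite.mem_toFinset] at hO hO'
    obtain ⟨w, -, hw⟩ := hO
    obtain ⟨w', -, hw'⟩ := hO'
    exact orbits_disjoint ⟨w, hw.symm⟩ ⟨w', hw'.symm⟩ hne
  have hwit : ∀ O ∈ I, {x ∈ B | f x = O}.ncard
      ≤ Amax * ∑ a ∈ S, (O ∩ {p : G.FW n | fws p = a}).ncard := by
    intro O hO
    rw [hI, Set.Finite.mem_toFinset] at hO
    obtain ⟨w, hwB, hfw⟩ := hO
    obtain ⟨a, haS, hsame⟩ := hS (fws w)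
    obtain ⟨ψ, hψ⟩ := hsame
    have hψ' : ψ • a = fws w := hψ
    set w₂ := ψ⁻¹ • w with hw₂
    have hw₂s : fws w₂ = a := by
      rw [hw₂, fws_smul, ← hψ', inv_smul_smul]
    have hw₂t : fwt w₂ = ψ⁻¹ • fwt w := by rw [hw₂, fwt_smul]
    have hsame2 : G.SameOrbit ob (fwt w₂) := by
      refine ⟨ψ⁻¹, ?_⟩
      show ψ⁻¹ • ob = fwt w₂
      rw [hw₂t, hwB]
    have hkey := key_orbit hlf hcon huni a ob w₂ hw₂s hsame2
    have horb : orb (⊤ : Subgroup G.Aut) w₂ = orb (⊤ : Subgroup G.Aut) w :=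
      orb_top_eq_of_mem ⟨ψ⁻¹, trivial, rfl⟩
    rw [horb] at hkey
    have hset1 : {x ∈ B | f x = O} = {p ∈ orb (⊤ : Subgroup G.Aut) w | fwt p = ob} := by
      rw [← hfw]
      ext z
      simp only [Set.mem_setOf_eq, hB, hf]
      constructor
      · rintro ⟨hz1, hz2⟩
        exact ⟨hz2 ▸ mem_orb_self _ z, hz1⟩
      · rintro ⟨hz1, hz2⟩
        exact ⟨hz2, orb_top_eq_of_mem hz1⟩
    have hset2 : {p ∈ orb (⊤ : Subgroup G.Aut) w | fws p = a}
        = O ∩ {p : G.FW n | fws p = a} := by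
      rw [← hfw]
      ext z
      constructor
      · rintro ⟨h1, h2⟩
        exact ⟨h1, h2⟩
      · rintro ⟨h1, h2⟩
        exact ⟨h1, h2⟩
    calc {x ∈ B | f x = O}.ncard
        ≤ G.sc a ob * {x ∈ B | f x = O}.ncard :=
          Nat.le_mul_of_pos_left _ (sc_pos hlf hcon a ob)
      _ = G.sc ob a * (O ∩ {p : G.FW n | fws p = a}).ncard := by
          rw [hset1, ← hkey, hset2]
      _ ≤ Amax * (O ∩ {p : G.FW n | fws p = a}).ncard :=
          Nat.mul_le_mul_right _ (sc_le_sup S hob haS)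
      _ ≤ Amax * ∑ a' ∈ S, (O ∩ {p : G.FW n | fws p = a'}).ncard := by
          apply mul_le_mul_right
          exact Finset.single_le_sum (f := fun a' => (O ∩ {p : G.FW n | fws p = a'}).ncard)
            (fun _ _ => Nat.zero_le _) haS
  calc ∑ O ∈ I, {x ∈ B | f x = O}.ncard
      ≤ ∑ O ∈ I, Amax * ∑ a ∈ S, (O ∩ {p : G.FW n | fws p = a}).ncard :=
        Finset.sum_le_sum hwit
    _ = Amax * ∑ a ∈ S, ∑ O ∈ I, (O ∩ {p : G.FW n | fws p = a}).ncard := by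
        rw [← Finset.mul_sum, Finset.sum_comm]
    _ ≤ Amax * ∑ a ∈ S, {p : G.FW n | fws p = a}.ncard := by
        apply mul_le_mul_right
        apply Finset.sum_le_sum
        intro a _
        exact sum_inter_ncard_le I (fun O => O) hdisj _ (sfiber_finite hlf a)

lemma count_eq_vt (huni : G.Unimodular) (hvt : G.VertexTransitive) (o : G.V) (n : ℕ) :
    {p : G.FW n | fws p = o}.ncard = {p : G.FW n | fwt p = o}.ncard := by
  classical
  set A := {p : G.FW n | fws p = o} with hA
  set B := {p : G.FW n | fwt p = o} with hB
  have hAfin : A.Finite := sfiber_finite hlf o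
  have hBfin : B.Finite := tfiber_finite hlf o
  set f : G.FW n → Set (G.FW n) := fun p => orb (⊤ : Subgroup G.Aut) p with hf
  rw [ncard_eq_sum_fibers A hAfin f, ncard_eq_sum_fibers B hBfin f]
  have hIeq : (hAfin.image f).toFinset = (hBfin.image f).toFinset := by
    ext O
    simp only [Set.Finite.mem_toFinset]
    constructor
    · rintro ⟨w, hw, rfl⟩
      obtain ⟨φ, hφ⟩ := hvt (fwt w) o
      refine ⟨φ • w, ?_, ?_⟩
      · show fwt (φ • w) = o
        rw [fwt_smul]
        exact hφ
      · exact orb_top_eq_of_mem ⟨φ, trivial, rfl⟩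
    · rintro ⟨w, hw, rfl⟩
      obtain ⟨φ, hφ⟩ := hvt (fws w) o
      refine ⟨φ • w, ?_, ?_⟩
      · show fws (φ • w) = o
        rw [fws_smul]
        exact hφ
      · exact orb_top_eq_of_mem ⟨φ, trivial, rfl⟩
  rw [hIeq]
  apply Finset.sum_congr rfl
  intro O hO
  rw [Set.Finite.mem_toFinset] at hO
  obtain ⟨w, hwB, hfw⟩ := hO
  obtain ⟨ψ, hψ⟩ := hvt (fws w) o
  set w₂ := ψ • w with hw₂
  have hw₂s : fws w₂ = o := by
    rw [hw₂, fws_smul]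
    exact hψ
  have hkey := key_orbit hlf hcon huni o o w₂ hw₂s (hvt o (fwt w₂))
  have horb : orb (⊤ : Subgroup G.Aut) w₂ = orb (⊤ : Subgroup G.Aut) w :=
    orb_top_eq_of_mem ⟨ψ, trivial, rfl⟩
  rw [horb] at hkey
  have h2 := Nat.eq_of_mul_eq_mul_left (sc_pos hlf hcon o o) hkey
  have hset1 : {x ∈ A | f x = O} = {p ∈ orb (⊤ : Subgroup G.Aut) w | fws p = o} := by
    rw [← hfw]
    ext z
    simp only [Set.mem_setOf_eq, hA, hf]
    constructor
    · rintro ⟨hz1, hz2⟩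
      exact ⟨hz2 ▸ mem_orb_self _ z, hz1⟩
    · rintro ⟨hz1, hz2⟩
      exact ⟨hz2, orb_top_eq_of_mem hz1⟩
  have hset2 : {x ∈ B | f x = O} = {p ∈ orb (⊤ : Subgroup G.Aut) w | fwt p = o} := by
    rw [← hfw]
    ext z
    simp only [Set.mem_setOf_eq, hB, hf]
    constructor
    · rintro ⟨hz1, hz2⟩
      exact ⟨hz2 ▸ mem_orb_self _ z, hz1⟩
    · rintro ⟨hz1, hz2⟩
      exact ⟨hz2, orb_top_eq_of_mem hz1⟩
  rw [hset1, hset2, h2]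

end Dgraph
/-- for unimodular `G`, there is `C ≥ 1` with
`C⁻¹ ≤ σ^F_n(G)/σ^B_n(Ḡ) ≤ C` for all `n`; if `G` is vertex-transitive one may take
`C = 1`, i.e. the two quantities agree. -/
theorem ssigmaF_comparable_ssigmaB_rev (G : Dgraph) (hinf : Infinite G.V)
    (hlf : G.LocallyFinite) (hsc : G.StronglyConnected) (hqt : G.QuasiTransitive)
    (huni : G.Unimodular) :
    ∃ C : ℝ≥0∞, 1 ≤ C ∧ C ≠ ⊤ ∧
      (∀ n : ℕ, G.ssigmaF n ≤ C * (G.rev).ssigmaB n ∧ (G.rev).ssigmaB n ≤ C * G.ssigmaF n) ∧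
      (G.VertexTransitive → ∀ n : ℕ, G.ssigmaF n = (G.rev).ssigmaB n) := by
  classical
  obtain ⟨S, hS⟩ := hqt
  set Amax := (S ×ˢ S).sup (fun q => G.sc q.1 q.2) with hAm
  set N : ℕ := Amax * S.card with hN
  refine ⟨(N : ℝ≥0∞) + 1, le_add_self, ENNReal.add_ne_top.mpr
    ⟨ENNReal.natCast_ne_top N, ENNReal.one_ne_top⟩, ?_, ?_⟩
  · intro n
    have hsumF : ∀ v : G.V, (G.sigmaF n v : ℝ≥0∞) ≤ (N : ℝ≥0∞) * (G.rev).ssigmaB n := by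
      intro v
      obtain ⟨oa, hoaS, hsame⟩ := hS v
      obtain ⟨φ, hφ⟩ := hsame
      have hv : G.sigmaF n v = G.sigmaF n oa := by
        rw [← hφ, Dgraph.sigmaF_eq, Dgraph.sigmaF_eq,
          show φ.vmap oa = φ • oa from rfl, Dgraph.sfiber_ncard_smul]
      have hb := Dgraph.count_bound_s hlf hsc huni S hS hoaS n
      calc (G.sigmaF n v : ℝ≥0∞) = ({p : G.FW n | Dgraph.fws p = oa}.ncard : ℝ≥0∞) := by
            rw [hv, Dgraph.sigmaF_eq]
        _ ≤ ((Amax * ∑ b ∈ S, {p : G.FW n | Dgraph.fwt p = b}.ncard : ℕ) : ℝ≥0∞) :=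
            Nat.cast_le.mpr hb
        _ = (Amax : ℝ≥0∞) * ∑ b ∈ S, ({p : G.FW n | Dgraph.fwt p = b}.ncard : ℝ≥0∞) := by
            push_cast
            rfl
        _ ≤ (Amax : ℝ≥0∞) * ∑ _b ∈ S, (G.rev).ssigmaB n := by
            apply mul_le_mul_right
            apply Finset.sum_le_sum
            intro b _
            rw [← Dgraph.sigmaB_eq]
            exact le_iSup (fun v : G.V => (((G.rev).sigmaB n v : ℕ) : ℝ≥0∞)) b
        _ = (N : ℝ≥0∞) * (G.rev).ssigmaB n := by
            rw [Finset.sum_const, nsmul_eq_mul, hN]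
            push_cast
            ring
    have hsumB : ∀ v : G.V, (((G.rev).sigmaB n v : ℕ) : ℝ≥0∞) ≤ (N : ℝ≥0∞) * G.ssigmaF n := by
      intro v
      obtain ⟨ob, hobS, hsame⟩ := hS v
      obtain ⟨φ, hφ⟩ := hsame
      have hv : (G.rev).sigmaB n v = (G.rev).sigmaB n ob := by
        rw [← hφ, Dgraph.sigmaB_eq, Dgraph.sigmaB_eq,
          show φ.vmap ob = φ • ob from rfl, Dgraph.tfiber_ncard_smul]
      have hb := Dgraph.count_bound_t hlf hsc huni S hS hobS n
      calc (((G.rev).sigmaB n v : ℕ) : ℝ≥0∞)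
          = ({p : G.FW n | Dgraph.fwt p = ob}.ncard : ℝ≥0∞) := by
            rw [hv, Dgraph.sigmaB_eq]
        _ ≤ ((Amax * ∑ a ∈ S, {p : G.FW n | Dgraph.fws p = a}.ncard : ℕ) : ℝ≥0∞) :=
            Nat.cast_le.mpr hb
        _ = (Amax : ℝ≥0∞) * ∑ a ∈ S, ({p : G.FW n | Dgraph.fws p = a}.ncard : ℝ≥0∞) := by
            push_cast
            rfl
        _ ≤ (Amax : ℝ≥0∞) * ∑ _a ∈ S, G.ssigmaF n := by
            apply mul_le_mul_right
            apply Finset.sum_le_sum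
            intro a _
            rw [← Dgraph.sigmaF_eq]
            exact le_iSup (fun v : G.V => ((G.sigmaF n v : ℕ) : ℝ≥0∞)) a
        _ = (N : ℝ≥0∞) * G.ssigmaF n := by
            rw [Finset.sum_const, nsmul_eq_mul, hN]
            push_cast
            ring
    constructor
    · calc G.ssigmaF n ≤ (N : ℝ≥0∞) * (G.rev).ssigmaB n := iSup_le hsumF
        _ ≤ ((N : ℝ≥0∞) + 1) * (G.rev).ssigmaB n := mul_le_mul_left le_self_add _
    · calc (G.rev).ssigmaB n ≤ (N : ℝ≥0∞) * G.ssigmaF n := iSup_le hsumB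
        _ ≤ ((N : ℝ≥0∞) + 1) * G.ssigmaF n := mul_le_mul_left le_self_add _
  · intro hvt n
    refine iSup_congr fun v => ?_
    congr 1
    rw [Dgraph.sigmaF_eq, Dgraph.sigmaB_eq]
    exact Dgraph.count_eq_vt hlf hsc huni hvt v n
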